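/- Let ι be a nonempty finite index type and for each i ∈ ι let (S i, A i, P i, J i, γ) be a finite MDP with common discount factor γ ∈ [0,1), with locally optimal value functions V_i* (the unique fixed points of the local Bellman optimality operators). Suppose for each i the policy π_i : S i → A i attains the minimum in the local Bellman optimality equation, i.e., J i x (π_i x) + γ ∑_{y ∈ S i} P i x (π_i x) y · V_i*(y) = min_{b ∈ A i} (J i x b + γ ∑_{y ∈ S i} P i x b y · V_i*(y)) for all x ∈ S i. Then the product policy π : (∏ i, S i) → (∏ i, A i) defined by (π s) i = π_i (s i) attains the minimum in the Bellman optimality equation of the product MDP at its optimal value function V*: for all s, J(s, π s) + γ ∑_{s'} P s (π s) s' · V*(s') = min_{a} (J(s,a) + γ ∑_{s'} P s a s' · V*(s')). -/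
import Mathlib

lemma sum_pi_prod {ι : Type*} [Fintype ι] [DecidableEq ι] (S : ι → Type*)
    [∀ i, Fintype (S i)] (f : ∀ i, S i → ℝ) :
    ∑ s' : ∀ i, S i, ∏ i, f i (s' i) = ∏ i, ∑ y, f i y := by
  rw [Finset.prod_univ_sum (fun _ => Finset.univ) f, Fintype.piFinset_univ]

lemma marg_lemma {ι : Type*} [Fintype ι] [DecidableEq ι] (S : ι → Type*)
    [∀ i, Fintype (S i)] (p : ∀ i, S i → ℝ) (hp1 : ∀ i, ∑ y, p i y = 1)
    (j : ι) (g : ∀ i, S i → ℝ) :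
    ∑ s' : ∀ i, S i, (∏ i, p i (s' i)) * g j (s' j) = ∑ y, p j y * g j y := by
  have key : ∀ s' : ∀ i, S i,
      (∏ i, p i (s' i)) * g j (s' j) = ∏ i, (p i (s' i) * (if i = j then g i (s' i) else 1)) := by
    intro s'
    rw [Finset.prod_mul_distrib]
    congr 1
    rw [Finset.prod_ite_eq' Finset.univ j (fun i => g i (s' i))]
    simp
  simp_rw [key]
  rw [show (∑ s' : ∀ i, S i, ∏ i, (p i (s' i) * if i = j then g i (s' i) else 1)) =
      ∏ i, ∑ y, (p i y * if i = j then g i y else 1) from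
    sum_pi_prod S (fun i y => p i y * if i = j then g i y else 1)]
  rw [Finset.prod_eq_single j]
  · simp
  · intro b _ hb
    simp [hb, hp1 b]
  · simp

lemma inf'_sum {ι : Type*} [Fintype ι] [Nonempty ι] [DecidableEq ι] (A : ι → Type*)
    [∀ i, Fintype (A i)] [∀ i, Nonempty (A i)] (f : ∀ i, A i → ℝ) :
    Finset.univ.inf' Finset.univ_nonempty (fun a : ∀ i, A i => ∑ i, f i (a i)) =
      ∑ i, Finset.univ.inf' Finset.univ_nonempty (f i) := by
  apply le_antisymm
  · choose b hb using fun i => Finset.exists_mem_eq_inf' (Finset.univ_nonempty (α := A i)) (f i)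
    calc Finset.univ.inf' Finset.univ_nonempty (fun a : ∀ i, A i => ∑ i, f i (a i))
        ≤ ∑ i, f i (b i) := Finset.inf'_le _ (Finset.mem_univ _)
      _ = ∑ i, Finset.univ.inf' Finset.univ_nonempty (f i) :=
          Finset.sum_congr rfl fun i _ => ((hb i).2).symm
  · apply Finset.le_inf'
    intro a _
    exact Finset.sum_le_sum fun i _ => Finset.inf'_le _ (Finset.mem_univ _)

lemma bellman_unique {X B : Type*} [Fintype X] [Nonempty X] [Fintype B] [Nonempty B]
    (c : X → B → ℝ) (p : X → B → X → ℝ)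
    (hp0 : ∀ s a s', 0 ≤ p s a s') (hp1 : ∀ s a, ∑ s', p s a s' = 1)
    {γ : ℝ} (hγ0 : 0 ≤ γ) (hγ1 : γ < 1) (V1 V2 : X → ℝ)
    (h1 : ∀ s, V1 s = Finset.univ.inf' Finset.univ_nonempty
      (fun a : B => c s a + γ * ∑ s', p s a s' * V1 s'))
    (h2 : ∀ s, V2 s = Finset.univ.inf' Finset.univ_nonempty
      (fun a : B => c s a + γ * ∑ s', p s a s' * V2 s')) :
    V1 = V2 := by
  set M := Finset.univ.sup' Finset.univ_nonempty (fun t => |V1 t - V2 t|) with hM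
  have hleM : ∀ t, |V1 t - V2 t| ≤ M := fun t => by
    rw [hM]; exact Finset.le_sup' (fun t => |V1 t - V2 t|) (Finset.mem_univ t)
  have hbound : ∀ s, |V1 s - V2 s| ≤ γ * M := by
    intro s
    rw [h1 s, h2 s, abs_sub_le_iff]
    have key : ∀ a : B, |(c s a + γ * ∑ s', p s a s' * V1 s') -
        (c s a + γ * ∑ s', p s a s' * V2 s')| ≤ γ * M := by
      intro a
      have hsplit : ∑ s', p s a s' * (V1 s' - V2 s') =
          (∑ s', p s a s' * V1 s') - ∑ s', p s a s' * V2 s' := by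
        rw [← Finset.sum_sub_distrib]
        exact Finset.sum_congr rfl fun x _ => mul_sub _ _ _
      have heq : (c s a + γ * ∑ s', p s a s' * V1 s') -
          (c s a + γ * ∑ s', p s a s' * V2 s') = γ * ∑ s', p s a s' * (V1 s' - V2 s') := by
        rw [hsplit]; ring
      rw [heq, abs_mul, abs_of_nonneg hγ0]
      apply mul_le_mul_of_nonneg_left _ hγ0
      calc |∑ s', p s a s' * (V1 s' - V2 s')| ≤ ∑ s', |p s a s' * (V1 s' - V2 s')| :=
            Finset.abs_sum_le_sum_abs _ _
        _ = ∑ s', p s a s' * |V1 s' - V2 s'| := by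
            refine Finset.sum_congr rfl fun s' _ => ?_
            rw [abs_mul, abs_of_nonneg (hp0 s a s')]
        _ ≤ ∑ s', p s a s' * M :=
            Finset.sum_le_sum fun s' _ =>
              mul_le_mul_of_nonneg_left (hleM s') (hp0 s a s')
        _ = M := by rw [← Finset.sum_mul, hp1 s a, one_mul]
    constructor
    · obtain ⟨a2, -, ha2⟩ := Finset.exists_mem_eq_inf' (Finset.univ_nonempty (α := B))
        (fun a : B => c s a + γ * ∑ s', p s a s' * V2 s')
      rw [ha2]
      calc _ ≤ (c s a2 + γ * ∑ s', p s a2 s' * V1 s') - (c s a2 + γ * ∑ s', p s a2 s' * V2 s') := by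
            gcongr; exact Finset.inf'_le _ (Finset.mem_univ _)
        _ ≤ |(c s a2 + γ * ∑ s', p s a2 s' * V1 s') - (c s a2 + γ * ∑ s', p s a2 s' * V2 s')| :=
            le_abs_self _
        _ ≤ γ * M := key a2
    · obtain ⟨a1, -, ha1⟩ := Finset.exists_mem_eq_inf' (Finset.univ_nonempty (α := B))
        (fun a : B => c s a + γ * ∑ s', p s a s' * V1 s')
      rw [ha1]
      calc _ ≤ (c s a1 + γ * ∑ s', p s a1 s' * V2 s') - (c s a1 + γ * ∑ s', p s a1 s' * V1 s') := by
            gcongr; exact Finset.inf'_le _ (Finset.mem_univ _)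
        _ ≤ |(c s a1 + γ * ∑ s', p s a1 s' * V1 s') - (c s a1 + γ * ∑ s', p s a1 s' * V2 s')| := by
            rw [abs_sub_comm]; exact le_abs_self _
        _ ≤ γ * M := key a1
  have hM0 : 0 ≤ M := by
    obtain ⟨x⟩ := ‹Nonempty X›
    exact le_trans (abs_nonneg _) (hleM x)
  have hMle : M ≤ γ * M := by
    obtain ⟨t, -, ht⟩ := Finset.exists_mem_eq_sup' (Finset.univ_nonempty (α := X))
      (fun t => |V1 t - V2 t|)
    calc M = |V1 t - V2 t| := hM.trans ht
      _ ≤ γ * M := hbound t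
  have hMeq : M = 0 := le_antisymm (by nlinarith) hM0
  funext s
  have h0 : |V1 s - V2 s| = 0 :=
    le_antisymm (le_trans (hbound s) (le_of_eq (by rw [hMeq, mul_zero]))) (abs_nonneg _)
  have := abs_eq_zero.mp h0
  linarith [sub_eq_zero.mp this]


set_option maxHeartbeats 1000000 in
/-- If each local policy `πᵢ` attains the minimum in the local Bellman
optimality equation at the local optimal value function `Vᵢ*`, then the product
policy `(π s) i = πᵢ (s i)` attains the minimum in the Bellman optimality
equation of the product MDP at its optimal value function `V*`. -/
theorem product_policy_attains_bellman_min
    {ι : Type*} [Fintype ι] [DecidableEq ι] [Nonempty ι]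
    (S A : ι → Type*)
    [∀ i, Fintype (S i)] [∀ i, Nonempty (S i)]
    [∀ i, Fintype (A i)] [∀ i, Nonempty (A i)]
    (P : ∀ i, S i → A i → S i → ℝ)
    (hP0 : ∀ i, ∀ (x : S i) (b : A i) (y : S i), 0 ≤ P i x b y)
    (hP1 : ∀ i, ∀ (x : S i) (b : A i), ∑ y : S i, P i x b y = 1)
    (J : ∀ i, S i → A i → ℝ)
    (γ : ℝ) (hγ0 : 0 ≤ γ) (hγ1 : γ < 1)
    -- `Vistar i` is the (unique) fixed point of the `i`-th local Bellman
    -- optimality operator: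
    (Vistar : ∀ i, S i → ℝ)
    (hVistar : ∀ i, ∀ x : S i,
      Vistar i x = Finset.univ.inf' Finset.univ_nonempty
        (fun b : A i => J i x b + γ * ∑ y : S i, P i x b y * Vistar i y))
    -- `Vstar` is the (unique) fixed point of the Bellman optimality operator
    -- of the product MDP:
    (Vstar : (∀ i, S i) → ℝ)
    (hVstar : ∀ s : ∀ i, S i,
      Vstar s = Finset.univ.inf' Finset.univ_nonempty
        (fun a : ∀ i, A i =>
          (∑ i, J i (s i) (a i)) +
            γ * ∑ s' : ∀ i, S i, (∏ i, P i (s i) (a i) (s' i)) * Vstar s'))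
    -- each local policy attains the minimum in the local Bellman equation:
    (π : ∀ i, S i → A i)
    (hπ : ∀ i, ∀ x : S i,
      J i x (π i x) + γ * ∑ y : S i, P i x (π i x) y * Vistar i y =
        Finset.univ.inf' Finset.univ_nonempty
          (fun b : A i => J i x b + γ * ∑ y : S i, P i x b y * Vistar i y)) :
    ∀ s : ∀ i, S i,
      (∑ i, J i (s i) (π i (s i))) +
          γ * ∑ s' : ∀ i, S i,
            (∏ i, P i (s i) (π i (s i)) (s' i)) * Vstar s' =
        Finset.univ.inf' Finset.univ_nonempty
          (fun a : ∀ i, A i =>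
            (∑ i, J i (s i) (a i)) +
              γ * ∑ s' : ∀ i, S i, (∏ i, P i (s i) (a i) (s' i)) * Vstar s') := by
  classical
  set W : (∀ i, S i) → ℝ := fun s => ∑ i, Vistar i (s i) with hW
  have hsum1 : ∀ (s : ∀ i, S i) (a : ∀ i, A i),
      ∑ s' : ∀ i, S i, ∏ i, P i (s i) (a i) (s' i) = 1 := by
    intro s a
    rw [sum_pi_prod S (fun i y => P i (s i) (a i) y)]
    simp [hP1]
  have hmarg : ∀ (s : ∀ i, S i) (a : ∀ i, A i),
      ∑ s' : ∀ i, S i, (∏ i, P i (s i) (a i) (s' i)) * W s' =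
        ∑ i, ∑ y, P i (s i) (a i) y * Vistar i y := by
    intro s a
    simp only [hW, Finset.mul_sum]
    rw [Finset.sum_comm]
    exact Finset.sum_congr rfl fun j _ =>
      marg_lemma S (fun i y => P i (s i) (a i) y) (fun i => hP1 i (s i) (a i)) j Vistar
  have hbody : ∀ (s : ∀ i, S i) (a : ∀ i, A i),
      ∑ i, (J i (s i) (a i) + γ * ∑ y, P i (s i) (a i) y * Vistar i y) =
        (∑ i, J i (s i) (a i)) +
          γ * ∑ s' : ∀ i, S i, (∏ i, P i (s i) (a i) (s' i)) * W s' := by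
    intro s a
    rw [hmarg s a, Finset.sum_add_distrib, Finset.mul_sum]
  have hWfix : ∀ s : ∀ i, S i,
      W s = Finset.univ.inf' Finset.univ_nonempty
        (fun a : ∀ i, A i =>
          (∑ i, J i (s i) (a i)) +
            γ * ∑ s' : ∀ i, S i, (∏ i, P i (s i) (a i) (s' i)) * W s') := by
    intro s
    calc W s = ∑ i, Finset.univ.inf' Finset.univ_nonempty
          (fun b : A i => J i (s i) b + γ * ∑ y, P i (s i) b y * Vistar i y) :=
        Finset.sum_congr rfl fun i _ => hVistar i (s i)
      _ = Finset.univ.inf' Finset.univ_nonempty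
          (fun a : ∀ i, A i =>
            ∑ i, (J i (s i) (a i) + γ * ∑ y, P i (s i) (a i) y * Vistar i y)) :=
        (inf'_sum A _).symm
      _ = _ := congrArg (Finset.univ.inf' Finset.univ_nonempty) (funext fun a => hbody s a)
  have hVWeq : Vstar = W :=
    bellman_unique (X := ∀ i, S i) (B := ∀ i, A i) (fun s a => ∑ i, J i (s i) (a i))
      (fun s a s' => ∏ i, P i (s i) (a i) (s' i))
      (fun s a s' => Finset.prod_nonneg fun i _ => hP0 i (s i) (a i) (s' i))
      hsum1 hγ0 hγ1 Vstar W hVstar hWfix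
  intro s
  rw [hVWeq]
  calc (∑ i, J i (s i) (π i (s i))) +
        γ * ∑ s' : ∀ i, S i, (∏ i, P i (s i) (π i (s i)) (s' i)) * W s'
      = ∑ i, (J i (s i) (π i (s i)) +
          γ * ∑ y, P i (s i) (π i (s i)) y * Vistar i y) :=
        (hbody s (fun i => π i (s i))).symm
    _ = ∑ i, Finset.univ.inf' Finset.univ_nonempty
          (fun b : A i => J i (s i) b + γ * ∑ y, P i (s i) b y * Vistar i y) :=
        Finset.sum_congr rfl fun i _ => hπ i (s i)
    _ = Finset.univ.inf' Finset.univ_nonempty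
          (fun a : ∀ i, A i =>
            ∑ i, (J i (s i) (a i) + γ * ∑ y, P i (s i) (a i) y * Vistar i y)) :=
        (inf'_sum A _).symm
    _ = _ := congrArg (Finset.univ.inf' Finset.univ_nonempty) (funext fun a => hbody s a)
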